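/- Let G be a finite directed flow network with four terminals s, a, b, c, with (s ↛ a) ≥ max{(s ↛ b), (s ↛ c)} and (s ↛ ab) ≥ (s ↛ ac). Define H on vertices {s, a, b, c, x} with edges: s→a of capacity (s ↛ a); s→b of capacity (s ↛ ab) − (s ↛ a); s→c of capacity (s ↛ abc) − (s ↛ ab); a→x of capacity (s ↛ bc) + (s ↛ a) − (s ↛ abc); b→x of capacity (s ↛ ac) + (s ↛ ab) − (s ↛ a) − (s ↛ abc); x→b of capacity (s ↛ b) + (s ↛ a) − (s ↛ ab); x→c of capacity (s ↛ c) + (s ↛ ab) − (s ↛ abc), where all min-cut values are measured in G. Then for every nonempty subset T of {a,b,c}, the minimum cut value (s ↛ T) in H equals (s ↛ T) in G. -/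

import Mathlib

open Finset

/-- Capacity of the cut determined by vertex set `A`: total capacity of edges leaving `A`. -/
def cutCap {V : Type} [Fintype V] [DecidableEq V] (c : V → V → ℝ) (A : Finset V) : ℝ :=
  ∑ u ∈ A, ∑ v ∈ Aᶜ, c u v

/-- Minimum capacity of a cut with all of `S` on the source side and all of `T` on the sink side. -/
noncomputable def minCut {V : Type} [Fintype V] [DecidableEq V] (c : V → V → ℝ) (S T : Finset V) : ℝ :=
  sInf {x : ℝ | ∃ A : Finset V, S ⊆ A ∧ Disjoint T A ∧ x = cutCap c A}

/-- Net outflow of `f` at vertex `v`. -/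
def netOut {V : Type} [Fintype V] (f : V → V → ℝ) (v : V) : ℝ :=
  (∑ w, f v w) - ∑ w, f w v

/-- `f` is an external flow in the network with capacities `c`, terminals `q` and
terminal net-outflow values `x`. -/
def IsExtFlow {V : Type} [Fintype V] {k : ℕ} (c f : V → V → ℝ) (q : Fin k → V)
    (x : Fin k → ℝ) : Prop :=
  (∀ u v, 0 ≤ f u v ∧ f u v ≤ c u v) ∧
  (∀ v, (∀ i, q i ≠ v) → netOut f v = 0) ∧
  (∀ i, netOut f (q i) = x i)

/-- The 5-vertex mimicking network for single-source external flows, on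
vertices `s=0, a=1, b=2, c=3, x=4` with the seven given edge capacities. -/
def cap7 (α β γ δ ε ζ η : ℝ) (u v : Fin 5) : ℝ :=
  if u = 0 ∧ v = 1 then α
  else if u = 0 ∧ v = 2 then β
  else if u = 0 ∧ v = 3 then γ
  else if u = 1 ∧ v = 4 then δ
  else if u = 2 ∧ v = 4 then ε
  else if u = 4 ∧ v = 2 then ζ
  else if u = 4 ∧ v = 3 then η
  else 0

section Aux

variable {V : Type} [Fintype V] [DecidableEq V] (c : V → V → ℝ)

lemma cutCap_eq (S : Finset V) :
    cutCap c S = ∑ u : V, ∑ v : V, if u ∈ S ∧ v ∉ S then c u v else 0 := by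
  unfold cutCap
  rw [show ∑ u ∈ S, ∑ v ∈ Sᶜ, c u v = ∑ u : V, if u ∈ S then ∑ v ∈ Sᶜ, c u v else 0 from by
    rw [Finset.sum_ite_mem, Finset.univ_inter]]
  refine Finset.sum_congr rfl fun u _ => ?_
  split_ifs with h
  · rw [show ∑ v ∈ Sᶜ, c u v = ∑ v : V, if v ∈ Sᶜ then c u v else 0 from by
      rw [Finset.sum_ite_mem, Finset.univ_inter]]
    simp [h, Finset.mem_compl]
  · simp [h]

lemma cutCap_nonneg (hc : ∀ u v, 0 ≤ c u v) (A : Finset V) : 0 ≤ cutCap c A := by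
  refine Finset.sum_nonneg fun u _ => Finset.sum_nonneg fun v _ => hc u v

lemma minCut_set_finite (S T : Finset V) :
    {x : ℝ | ∃ A : Finset V, S ⊆ A ∧ Disjoint T A ∧ x = cutCap c A}.Finite := by
  apply Set.Finite.subset (Set.finite_range (cutCap c))
  rintro x ⟨A, _, _, rfl⟩
  exact ⟨A, rfl⟩

lemma minCut_le {S T A : Finset V} (hS : S ⊆ A) (hT : Disjoint T A) :
    minCut c S T ≤ cutCap c A :=
  csInf_le (minCut_set_finite c S T).bddBelow ⟨A, hS, hT, rfl⟩

lemma minCut_exists {S T : Finset V} (hd : Disjoint S T) :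
    ∃ A : Finset V, S ⊆ A ∧ Disjoint T A ∧ minCut c S T = cutCap c A := by
  have hST : S ⊆ Tᶜ := fun x hx => Finset.mem_compl.mpr (Finset.disjoint_left.mp hd hx)
  have hne : {x : ℝ | ∃ A : Finset V, S ⊆ A ∧ Disjoint T A ∧ x = cutCap c A}.Nonempty :=
    ⟨cutCap c Tᶜ, Tᶜ, hST, disjoint_compl_right, rfl⟩
  have hmem := hne.csInf_mem (minCut_set_finite c S T)
  exact hmem

lemma minCut_nonneg (hc : ∀ u v, 0 ≤ c u v) {S T : Finset V} (hd : Disjoint S T) :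
    0 ≤ minCut c S T := by
  obtain ⟨A, _, _, hA⟩ := minCut_exists c hd
  rw [hA]; exact cutCap_nonneg c hc A

lemma minCut_mono {S T T' : Finset V} (hTT : T ⊆ T') (hd : Disjoint S T') :
    minCut c S T ≤ minCut c S T' := by
  obtain ⟨A, hS, hT', hA⟩ := minCut_exists c hd
  rw [hA]
  exact minCut_le c hS (Finset.disjoint_of_subset_left hTT hT')

lemma cutCap_submod (hc : ∀ u v, 0 ≤ c u v) (A B : Finset V) :
    cutCap c (A ∪ B) + cutCap c (A ∩ B) ≤ cutCap c A + cutCap c B := by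
  rw [cutCap_eq, cutCap_eq, cutCap_eq, cutCap_eq, ← Finset.sum_add_distrib,
    ← Finset.sum_add_distrib]
  refine Finset.sum_le_sum fun u _ => ?_
  rw [← Finset.sum_add_distrib, ← Finset.sum_add_distrib]
  refine Finset.sum_le_sum fun v _ => ?_
  by_cases h1 : u ∈ A <;> by_cases h2 : u ∈ B <;> by_cases h3 : v ∈ A <;> by_cases h4 : v ∈ B <;>
    simp [Finset.mem_union, Finset.mem_inter, h1, h2, h3, h4] <;> linarith [hc u v]

lemma minCut_submod (hc : ∀ u v, 0 ≤ c u v) {S T₁ T₂ : Finset V}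
    (hd1 : Disjoint S T₁) (hd2 : Disjoint S T₂) :
    minCut c S (T₁ ∪ T₂) + minCut c S (T₁ ∩ T₂) ≤ minCut c S T₁ + minCut c S T₂ := by
  obtain ⟨A, hSA, hTA, hA⟩ := minCut_exists c hd1
  obtain ⟨B, hSB, hTB, hB⟩ := minCut_exists c hd2
  have h1 : minCut c S (T₁ ∪ T₂) ≤ cutCap c (A ∩ B) :=
    minCut_le c (Finset.subset_inter hSA hSB)
      (Finset.disjoint_union_left.mpr
        ⟨Finset.disjoint_of_subset_right Finset.inter_subset_left hTA,
         Finset.disjoint_of_subset_right Finset.inter_subset_right hTB⟩)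
  have h2 : minCut c S (T₁ ∩ T₂) ≤ cutCap c (A ∪ B) :=
    minCut_le c (hSA.trans Finset.subset_union_left)
      (Finset.disjoint_union_right.mpr
        ⟨Finset.disjoint_of_subset_left Finset.inter_subset_left hTA,
         Finset.disjoint_of_subset_left Finset.inter_subset_right hTB⟩)
  have := cutCap_submod c hc A B
  linarith [h1, h2, this, hA, hB]

lemma cutCap_cap7 (α β γ δ ε ζ η : ℝ) (A : Finset (Fin 5)) :
    cutCap (cap7 α β γ δ ε ζ η) A =
      (if 0 ∈ A ∧ 1 ∉ A then α else 0) + (if 0 ∈ A ∧ 2 ∉ A then β else 0) +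
      (if 0 ∈ A ∧ 3 ∉ A then γ else 0) + (if 1 ∈ A ∧ 4 ∉ A then δ else 0) +
      (if 2 ∈ A ∧ 4 ∉ A then ε else 0) + (if 4 ∈ A ∧ 2 ∉ A then ζ else 0) +
      (if 4 ∈ A ∧ 3 ∉ A then η else 0) := by
  rw [cutCap_eq]
  rw [Fin.sum_univ_five]
  simp only [Fin.sum_univ_five, cap7]
  norm_num
  by_cases h0 : (0:Fin 5) ∈ A <;> by_cases h1 : (1:Fin 5) ∈ A <;> by_cases h2 : (2:Fin 5) ∈ A <;>
    by_cases h3 : (3:Fin 5) ∈ A <;> by_cases h4 : (4:Fin 5) ∈ A <;>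
    simp [h0, h1, h2, h3, h4] <;> ring

end Aux

set_option maxHeartbeats 2000000 in
theorem stmt7 {V : Type} [Fintype V] [DecidableEq V] (c : V → V → ℝ)
    (hc : ∀ u v, 0 ≤ c u v) (s : V) (t : Fin 3 → V)
    (ht : Function.Injective t) (hs : s ∉ Set.range t)
    (h1 : minCut c {s} {t 1} ≤ minCut c {s} {t 0})
    (h2 : minCut c {s} {t 2} ≤ minCut c {s} {t 0})
    (h3 : minCut c {s} {t 0, t 2} ≤ minCut c {s} {t 0, t 1}) :
    ∀ T : Finset (Fin 3), T.Nonempty →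
      minCut
        (cap7 (minCut c {s} {t 0})
              (minCut c {s} {t 0, t 1} - minCut c {s} {t 0})
              (minCut c {s} {t 0, t 1, t 2} - minCut c {s} {t 0, t 1})
              (minCut c {s} {t 1, t 2} + minCut c {s} {t 0}
                 - minCut c {s} {t 0, t 1, t 2})
              (minCut c {s} {t 0, t 2} + minCut c {s} {t 0, t 1}
                 - minCut c {s} {t 0} - minCut c {s} {t 0, t 1, t 2})
              (minCut c {s} {t 1} + minCut c {s} {t 0} - minCut c {s} {t 0, t 1})
              (minCut c {s} {t 2} + minCut c {s} {t 0, t 1}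
                 - minCut c {s} {t 0, t 1, t 2}))
        {(0 : Fin 5)} (T.image fun i => i.succ.castSucc) =
      minCut c {s} (T.image t) := by
  -- basic distinctness facts
  have hst : ∀ i, s ≠ t i := fun i h => hs ⟨i, h.symm⟩
  have hne01 : t 0 ≠ t 1 := fun h => absurd (ht h) (by decide)
  have hne02 : t 0 ≠ t 2 := fun h => absurd (ht h) (by decide)
  have hne12 : t 1 ≠ t 2 := fun h => absurd (ht h) (by decide)
  -- disjointness of {s} from the sink sets
  have hd1 : Disjoint ({s} : Finset V) {t 0} := by simp [hst 0]
  have hd2 : Disjoint ({s} : Finset V) {t 1} := by simp [hst 1]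
  have hd3 : Disjoint ({s} : Finset V) {t 2} := by simp [hst 2]
  have hd12 : Disjoint ({s} : Finset V) {t 0, t 1} := by simp [hst 0, hst 1]
  have hd13 : Disjoint ({s} : Finset V) {t 0, t 2} := by simp [hst 0, hst 2]
  have hd23 : Disjoint ({s} : Finset V) {t 1, t 2} := by simp [hst 1, hst 2]
  have hd123 : Disjoint ({s} : Finset V) {t 0, t 1, t 2} := by simp [hst 0, hst 1, hst 2]
  have hd0 : Disjoint ({s} : Finset V) (∅ : Finset V) := Finset.disjoint_empty_right _
  -- nonnegativity
  have hn1 := minCut_nonneg c hc hd1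
  have hn2 := minCut_nonneg c hc hd2
  have hn3 := minCut_nonneg c hc hd3
  have hn12 := minCut_nonneg c hc hd12
  have hn13 := minCut_nonneg c hc hd13
  have hn23 := minCut_nonneg c hc hd23
  have hn123 := minCut_nonneg c hc hd123
  have hn0 := minCut_nonneg c hc hd0
  -- monotonicity
  have hm1 : minCut c {s} {t 0} ≤ minCut c {s} {t 0, t 1} :=
    minCut_mono c (by intro x hx; simp at hx ⊢; tauto) hd12
  have hm2 : minCut c {s} {t 1} ≤ minCut c {s} {t 0, t 1} :=
    minCut_mono c (by intro x hx; simp at hx ⊢; tauto) hd12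
  have hm3 : minCut c {s} {t 0} ≤ minCut c {s} {t 0, t 2} :=
    minCut_mono c (by intro x hx; simp at hx ⊢; tauto) hd13
  have hm4 : minCut c {s} {t 2} ≤ minCut c {s} {t 0, t 2} :=
    minCut_mono c (by intro x hx; simp at hx ⊢; tauto) hd13
  have hm5 : minCut c {s} {t 1} ≤ minCut c {s} {t 1, t 2} :=
    minCut_mono c (by intro x hx; simp at hx ⊢; tauto) hd23
  have hm6 : minCut c {s} {t 2} ≤ minCut c {s} {t 1, t 2} :=
    minCut_mono c (by intro x hx; simp at hx ⊢; tauto) hd23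
  have hm7 : minCut c {s} {t 0, t 1} ≤ minCut c {s} {t 0, t 1, t 2} :=
    minCut_mono c (by intro x hx; simp at hx ⊢; tauto) hd123
  have hm8 : minCut c {s} {t 0, t 2} ≤ minCut c {s} {t 0, t 1, t 2} :=
    minCut_mono c (by intro x hx; simp at hx ⊢; tauto) hd123
  have hm9 : minCut c {s} {t 1, t 2} ≤ minCut c {s} {t 0, t 1, t 2} :=
    minCut_mono c (by intro x hx; simp at hx ⊢; tauto) hd123
  have hm10 : minCut c {s} {t 0} ≤ minCut c {s} {t 0, t 1, t 2} :=
    minCut_mono c (by intro x hx; simp at hx ⊢; tauto) hd123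
  have hm11 : minCut c {s} {t 1} ≤ minCut c {s} {t 0, t 1, t 2} :=
    minCut_mono c (by intro x hx; simp at hx ⊢; tauto) hd123
  have hm12 : minCut c {s} {t 2} ≤ minCut c {s} {t 0, t 1, t 2} :=
    minCut_mono c (by intro x hx; simp at hx ⊢; tauto) hd123
  -- submodularity instances
  have hU1 : ({t 0} ∪ {t 1, t 2} : Finset V) = {t 0, t 1, t 2} := by
    ext x; simp <;> tauto
  have hI1 : ({t 0} ∩ {t 1, t 2} : Finset V) = ∅ :=
    Finset.singleton_inter_of_notMem (by simp [hne01, hne02])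
  have hS1 : minCut c {s} {t 0, t 1, t 2} ≤ minCut c {s} {t 0} + minCut c {s} {t 1, t 2} := by
    have := minCut_submod c hc hd1 hd23
    rw [hU1, hI1] at this; linarith
  have hU2 : ({t 0, t 2} ∪ {t 0, t 1} : Finset V) = {t 0, t 1, t 2} := by
    ext x; simp <;> tauto
  have hI2 : ({t 0, t 2} ∩ {t 0, t 1} : Finset V) = {t 0} := by
    rw [Finset.insert_inter_of_mem (by simp),
      Finset.singleton_inter_of_notMem (by simp [hne02.symm, hne12.symm])]
    simp
  have hS2 : minCut c {s} {t 0, t 1, t 2} + minCut c {s} {t 0} ≤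
      minCut c {s} {t 0, t 2} + minCut c {s} {t 0, t 1} := by
    have := minCut_submod c hc hd13 hd12
    rw [hU2, hI2] at this; linarith
  have hU3 : ({t 0} ∪ {t 1} : Finset V) = {t 0, t 1} := by ext x; simp <;> tauto
  have hI3 : ({t 0} ∩ {t 1} : Finset V) = ∅ :=
    Finset.singleton_inter_of_notMem (by simp [hne01])
  have hS3 : minCut c {s} {t 0, t 1} ≤ minCut c {s} {t 0} + minCut c {s} {t 1} := by
    have := minCut_submod c hc hd1 hd2
    rw [hU3, hI3] at this; linarith
  have hU4 : ({t 2} ∪ {t 0, t 1} : Finset V) = {t 0, t 1, t 2} := by ext x; simp <;> tauto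
  have hI4 : ({t 2} ∩ {t 0, t 1} : Finset V) = ∅ :=
    Finset.singleton_inter_of_notMem (by simp [hne02.symm, hne12.symm])
  have hS4 : minCut c {s} {t 0, t 1, t 2} ≤ minCut c {s} {t 2} + minCut c {s} {t 0, t 1} := by
    have := minCut_submod c hc hd3 hd12
    rw [hU4, hI4] at this; linarith
  have hU5 : ({t 0, t 1} ∪ {t 1, t 2} : Finset V) = {t 0, t 1, t 2} := by ext x; simp <;> tauto
  have hI5 : ({t 0, t 1} ∩ {t 1, t 2} : Finset V) = {t 1} := by
    rw [Finset.insert_inter_of_notMem (by simp [hne01, hne02]),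
      Finset.singleton_inter_of_mem (by simp)]
  have hS5 : minCut c {s} {t 0, t 1, t 2} + minCut c {s} {t 1} ≤
      minCut c {s} {t 0, t 1} + minCut c {s} {t 1, t 2} := by
    have := minCut_submod c hc hd12 hd23
    rw [hU5, hI5] at this; linarith
  have hU6 : ({t 1, t 2} ∪ {t 0, t 2} : Finset V) = {t 0, t 1, t 2} := by ext x; simp <;> tauto
  have hI6 : ({t 1, t 2} ∩ {t 0, t 2} : Finset V) = {t 2} := by
    rw [Finset.insert_inter_of_notMem (by simp [hne01.symm, hne12]),
      Finset.singleton_inter_of_mem (by simp)]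
  have hS6 : minCut c {s} {t 0, t 1, t 2} + minCut c {s} {t 2} ≤
      minCut c {s} {t 1, t 2} + minCut c {s} {t 0, t 2} := by
    have := minCut_submod c hc hd23 hd13
    rw [hU6, hI6] at this; linarith
  have hU7 : ({t 1} ∪ {t 2} : Finset V) = {t 1, t 2} := by ext x; simp
  have hI7 : ({t 1} ∩ {t 2} : Finset V) = ∅ :=
    Finset.singleton_inter_of_notMem (by simp [hne12])
  have hS7 : minCut c {s} {t 1, t 2} ≤ minCut c {s} {t 1} + minCut c {s} {t 2} := by
    have := minCut_submod c hc hd2 hd3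
    rw [hU7, hI7] at this; linarith
  have hU8 : ({t 0} ∪ {t 2} : Finset V) = {t 0, t 2} := by ext x; simp
  have hI8 : ({t 0} ∩ {t 2} : Finset V) = ∅ :=
    Finset.singleton_inter_of_notMem (by simp [hne02])
  have hS8 : minCut c {s} {t 0, t 2} ≤ minCut c {s} {t 0} + minCut c {s} {t 2} := by
    have := minCut_submod c hc hd1 hd3
    rw [hU8, hI8] at this; linarith
  -- case analysis on T
  have hcase : ∀ T : Finset (Fin 3), T.Nonempty →
      T = {0} ∨ T = {1} ∨ T = {2} ∨ T = {0, 1} ∨ T = {0, 2} ∨ T = {1, 2} ∨ T = {0, 1, 2} := by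
    decide
  intro T hT
  rcases hcase T hT with rfl | rfl | rfl | rfl | rfl | rfl | rfl
  · -- T = {a}
    rw [show (({0} : Finset (Fin 3)).image fun i => i.succ.castSucc) = ({1} : Finset (Fin 5))
        from by decide,
      show ({0} : Finset (Fin 3)).image t = {t 0} from by simp]
    refine le_antisymm ((minCut_le _ (A := {0, 2, 3, 4}) (by decide) (by decide)).trans_eq ?_) ?_
    · rw [cutCap_cap7]; simp <;> ring
    · refine le_csInf ⟨_, {0, 2, 3, 4}, by decide, by decide, rfl⟩ ?_
      rintro x ⟨A, hSA, hdA, rfl⟩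
      have g0 : (0 : Fin 5) ∈ A := Finset.singleton_subset_iff.mp hSA
      have g1 : (1 : Fin 5) ∉ A := Finset.disjoint_left.mp hdA (by decide)
      rw [cutCap_cap7]
      by_cases g2 : (2 : Fin 5) ∈ A <;> by_cases g3 : (3 : Fin 5) ∈ A <;>
        by_cases g4 : (4 : Fin 5) ∈ A <;> simp [g0, g1, g2, g3, g4] <;> linarith
  · -- T = {b}
    rw [show (({1} : Finset (Fin 3)).image fun i => i.succ.castSucc) = ({2} : Finset (Fin 5))
        from by decide,
      show ({1} : Finset (Fin 3)).image t = {t 1} from by simp]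
    refine le_antisymm ((minCut_le _ (A := {0, 1, 3, 4}) (by decide) (by decide)).trans_eq ?_) ?_
    · rw [cutCap_cap7]; simp <;> ring
    · refine le_csInf ⟨_, {0, 1, 3, 4}, by decide, by decide, rfl⟩ ?_
      rintro x ⟨A, hSA, hdA, rfl⟩
      have g0 : (0 : Fin 5) ∈ A := Finset.singleton_subset_iff.mp hSA
      have g2 : (2 : Fin 5) ∉ A := Finset.disjoint_left.mp hdA (by decide)
      rw [cutCap_cap7]
      by_cases g1 : (1 : Fin 5) ∈ A <;> by_cases g3 : (3 : Fin 5) ∈ A <;>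
        by_cases g4 : (4 : Fin 5) ∈ A <;> simp [g0, g1, g2, g3, g4] <;> linarith
  · -- T = {c}
    rw [show (({2} : Finset (Fin 3)).image fun i => i.succ.castSucc) = ({3} : Finset (Fin 5))
        from by decide,
      show ({2} : Finset (Fin 3)).image t = {t 2} from by simp]
    refine le_antisymm ((minCut_le _ (A := {0, 1, 2, 4}) (by decide) (by decide)).trans_eq ?_) ?_
    · rw [cutCap_cap7]; simp <;> ring
    · refine le_csInf ⟨_, {0, 1, 2, 4}, by decide, by decide, rfl⟩ ?_
      rintro x ⟨A, hSA, hdA, rfl⟩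
      have g0 : (0 : Fin 5) ∈ A := Finset.singleton_subset_iff.mp hSA
      have g3 : (3 : Fin 5) ∉ A := Finset.disjoint_left.mp hdA (by decide)
      rw [cutCap_cap7]
      by_cases g1 : (1 : Fin 5) ∈ A <;> by_cases g2 : (2 : Fin 5) ∈ A <;>
        by_cases g4 : (4 : Fin 5) ∈ A <;> simp [g0, g1, g2, g3, g4] <;> linarith
  · -- T = {a, b}
    rw [show (({0, 1} : Finset (Fin 3)).image fun i => i.succ.castSucc) = ({1, 2} : Finset (Fin 5))
        from by decide,
      show ({0, 1} : Finset (Fin 3)).image t = {t 0, t 1} from by simp]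
    refine le_antisymm ((minCut_le _ (A := {0, 3}) (by decide) (by decide)).trans_eq ?_) ?_
    · rw [cutCap_cap7]; simp <;> ring
    · refine le_csInf ⟨_, {0, 3}, by decide, by decide, rfl⟩ ?_
      rintro x ⟨A, hSA, hdA, rfl⟩
      have g0 : (0 : Fin 5) ∈ A := Finset.singleton_subset_iff.mp hSA
      have g1 : (1 : Fin 5) ∉ A := Finset.disjoint_left.mp hdA (by decide)
      have g2 : (2 : Fin 5) ∉ A := Finset.disjoint_left.mp hdA (by decide)
      rw [cutCap_cap7]
      by_cases g3 : (3 : Fin 5) ∈ A <;> by_cases g4 : (4 : Fin 5) ∈ A <;>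
        simp [g0, g1, g2, g3, g4] <;> linarith
  · -- T = {a, c}
    rw [show (({0, 2} : Finset (Fin 3)).image fun i => i.succ.castSucc) = ({1, 3} : Finset (Fin 5))
        from by decide,
      show ({0, 2} : Finset (Fin 3)).image t = {t 0, t 2} from by simp]
    refine le_antisymm ((minCut_le _ (A := {0, 2}) (by decide) (by decide)).trans_eq ?_) ?_
    · rw [cutCap_cap7]; simp <;> ring
    · refine le_csInf ⟨_, {0, 2}, by decide, by decide, rfl⟩ ?_
      rintro x ⟨A, hSA, hdA, rfl⟩
      have g0 : (0 : Fin 5) ∈ A := Finset.singleton_subset_iff.mp hSA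
      have g1 : (1 : Fin 5) ∉ A := Finset.disjoint_left.mp hdA (by decide)
      have g3 : (3 : Fin 5) ∉ A := Finset.disjoint_left.mp hdA (by decide)
      rw [cutCap_cap7]
      by_cases g2 : (2 : Fin 5) ∈ A <;> by_cases g4 : (4 : Fin 5) ∈ A <;>
        simp [g0, g1, g2, g3, g4] <;> linarith
  · -- T = {b, c}
    rw [show (({1, 2} : Finset (Fin 3)).image fun i => i.succ.castSucc) = ({2, 3} : Finset (Fin 5))
        from by decide,
      show ({1, 2} : Finset (Fin 3)).image t = {t 1, t 2} from by simp]
    refine le_antisymm ((minCut_le _ (A := {0, 1}) (by decide) (by decide)).trans_eq ?_) ?_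
    · rw [cutCap_cap7]; simp <;> ring
    · refine le_csInf ⟨_, {0, 1}, by decide, by decide, rfl⟩ ?_
      rintro x ⟨A, hSA, hdA, rfl⟩
      have g0 : (0 : Fin 5) ∈ A := Finset.singleton_subset_iff.mp hSA
      have g2 : (2 : Fin 5) ∉ A := Finset.disjoint_left.mp hdA (by decide)
      have g3 : (3 : Fin 5) ∉ A := Finset.disjoint_left.mp hdA (by decide)
      rw [cutCap_cap7]
      by_cases g1 : (1 : Fin 5) ∈ A <;> by_cases g4 : (4 : Fin 5) ∈ A <;>
        simp [g0, g1, g2, g3, g4] <;> linarith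
  · -- T = {a, b, c}
    rw [show (({0, 1, 2} : Finset (Fin 3)).image fun i => i.succ.castSucc)
          = ({1, 2, 3} : Finset (Fin 5)) from by decide,
      show ({0, 1, 2} : Finset (Fin 3)).image t = {t 0, t 1, t 2} from by simp]
    refine le_antisymm ((minCut_le _ (A := {0}) (by decide) (by decide)).trans_eq ?_) ?_
    · rw [cutCap_cap7]; simp <;> ring
    · refine le_csInf ⟨_, {0}, by decide, by decide, rfl⟩ ?_
      rintro x ⟨A, hSA, hdA, rfl⟩
      have g0 : (0 : Fin 5) ∈ A := Finset.singleton_subset_iff.mp hSA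
      have g1 : (1 : Fin 5) ∉ A := Finset.disjoint_left.mp hdA (by decide)
      have g2 : (2 : Fin 5) ∉ A := Finset.disjoint_left.mp hdA (by decide)
      have g3 : (3 : Fin 5) ∉ A := Finset.disjoint_left.mp hdA (by decide)
      rw [cutCap_cap7]
      by_cases g4 : (4 : Fin 5) ∈ A <;> simp [g0, g1, g2, g3, g4] <;> linarith
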